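/- Let Π be a set, k : Π × Π → ℝ, λ > 0 and σ² > 0. Fix t ∈ ℕ, points π₁, …, π_t ∈ Π and a point π ∈ Π with k(π,π) = σ², and assume that the (t+1)×(t+1) Gram matrix of k at the points (π₁, …, π_t, π) is symmetric and positive semidefinite. Let K_t be the t×t matrix with entries (K_t)_{ij} = k(π_i, π_j), let k_t(π) := (k(π,π₁), …, k(π,π_t))ᵀ, and let N_t(π) := #{i ∈ {1,…,t} : π_i = π}. Then the posterior variance σ_t²(π) := k(π,π) − k_t(π)ᵀ (K_t + λI)^{-1} k_t(π) satisfies σ_t²(π) ≤ λ / (λ/σ² + N_t(π)). -/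

import Mathlib

open Matrix

theorem posterior_variance_le_of_repeats
    {α : Type*} (k : α → α → ℝ) (lam s : ℝ) (hlam : 0 < lam) (hs : 0 < s)
    (t : ℕ) (p : Fin t → α) (π : α) (hkπ : k π π = s)
    (hGram : (Matrix.of fun i j : Fin (t + 1) =>
      k ((Fin.snoc p π : Fin (t + 1) → α) i) ((Fin.snoc p π : Fin (t + 1) → α) j)).PosSemidef)
    (N : ℕ) (hN : N = Nat.card {i : Fin t // p i = π}) :
    k π π - (fun i => k π (p i)) ⬝ᵥ
        (((Matrix.of fun i j : Fin t => k (p i) (p j)) + lam • 1)⁻¹ *ᵥ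
          fun i => k π (p i)) ≤
      lam / (lam / s + N) := by
  classical
  set K : Matrix (Fin t) (Fin t) ℝ := Matrix.of fun i j => k (p i) (p j) with hKdef
  set v : Fin t → ℝ := fun i => k π (p i) with hvdef
  set A : Matrix (Fin t) (Fin t) ℝ := K + lam • 1 with hAdef
  -- K is positive semidefinite (principal submatrix of the big Gram matrix)
  have hK : K.PosSemidef := by
    have h := hGram.submatrix Fin.castSucc
    have heq : (Matrix.of fun i j : Fin (t + 1) =>
        k ((Fin.snoc p π : Fin (t + 1) → α) i) ((Fin.snoc p π : Fin (t + 1) → α) j)).submatrix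
        Fin.castSucc Fin.castSucc = K := by
      ext i j
      simp [Matrix.submatrix_apply, Fin.snoc_castSucc, hKdef]
    rwa [heq] at h
  have hlamI : (lam • (1 : Matrix (Fin t) (Fin t) ℝ)).PosDef := by
    rw [Matrix.smul_one_eq_diagonal]
    exact Matrix.posDef_diagonal_iff.mpr fun i => hlam
  have hA : A.PosDef := Matrix.PosDef.posSemidef_add hK hlamI
  have hdet : IsUnit A.det := isUnit_iff_ne_zero.mpr hA.det_pos.ne'
  have hAinv : A * A⁻¹ = 1 := Matrix.mul_nonsing_inv A hdet
  set u : Fin t → ℝ := A⁻¹ *ᵥ v with hudef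
  have hAu : A *ᵥ u = v := by
    rw [hudef, Matrix.mulVec_mulVec, hAinv, Matrix.one_mulVec]
  -- symmetry of A
  have ht : Aᵀ = A := by
    have := hA.isHermitian.eq
    simpa [Matrix.conjTranspose_eq_transpose_of_trivial] using hA.isHermitian.eq
  have hsymm : ∀ x y : Fin t → ℝ, x ⬝ᵥ (A *ᵥ y) = y ⬝ᵥ (A *ᵥ x) := by
    intro x y
    rw [Matrix.dotProduct_mulVec, ← Matrix.mulVec_transpose, ht, dotProduct_comm]
  -- key minimization inequality
  have key : ∀ w : Fin t → ℝ,
      s - v ⬝ᵥ u ≤ s - 2 * (w ⬝ᵥ v) + w ⬝ᵥ (A *ᵥ w) := by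
    intro w
    have h0 : 0 ≤ (w - u) ⬝ᵥ (A *ᵥ (w - u)) := by
      have := hA.posSemidef.dotProduct_mulVec_nonneg (w - u)
      simpa using this
    have hexp : (w - u) ⬝ᵥ (A *ᵥ (w - u))
        = w ⬝ᵥ (A *ᵥ w) - 2 * (w ⬝ᵥ v) + v ⬝ᵥ u := by
      rw [Matrix.mulVec_sub, dotProduct_sub, sub_dotProduct,
        sub_dotProduct, hAu]
      have h1 : u ⬝ᵥ (A *ᵥ w) = w ⬝ᵥ (A *ᵥ u) := hsymm u w
      have h2 : u ⬝ᵥ v = v ⬝ᵥ u := dotProduct_comm u v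
      rw [h1, hAu, h2]
      have h3 : w ⬝ᵥ v = v ⬝ᵥ u → True := fun _ => trivial
      ring
    linarith [h0, hexp ▸ h0]
  -- the test vector
  set d : ℝ := lam + N * s with hddef
  have hd : 0 < d := by positivity
  set c : ℝ := s / d with hcdef
  set w : Fin t → ℝ := fun i => if p i = π then c else 0 with hwdef
  -- cardinality
  set m : ℕ := (Finset.univ.filter (fun i : Fin t => p i = π)).card with hmdef
  have hm : m = N := by
    rw [hN, Nat.card_eq_fintype_card, Fintype.card_subtype, hmdef]
  -- compute w ⬝ᵥ v
  have hb : w ⬝ᵥ v = m * (c * s) := by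
    rw [dotProduct]
    have : ∀ i : Fin t, w i * v i = if p i = π then c * s else 0 := by
      intro i
      by_cases h : p i = π
      · simp [hwdef, hvdef, h, hkπ]
      · simp [hwdef, h]
    rw [Finset.sum_congr rfl fun i _ => this i]
    rw [Finset.sum_ite, Finset.sum_const, Finset.sum_const_zero, add_zero, hmdef,
      nsmul_eq_mul]
  -- compute w ⬝ᵥ (A *ᵥ w)
  have ha : w ⬝ᵥ (A *ᵥ w) = (m : ℝ) * c * ((m : ℝ) * (s * c)) + lam * ((m : ℝ) * (c * c)) := by
    have hAw : A *ᵥ w = K *ᵥ w + lam • w := by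
      rw [hAdef, Matrix.add_mulVec, Matrix.smul_mulVec, Matrix.one_mulVec]
    rw [hAw, dotProduct_add, dotProduct_smul]
    have hinner : ∀ i : Fin t, p i = π → (K *ᵥ w) i = (m : ℝ) * (s * c) := by
      intro i hi
      rw [Matrix.mulVec, dotProduct]
      have : ∀ j : Fin t, K i j * w j = if p j = π then s * c else 0 := by
        intro j
        by_cases h : p j = π
        · simp [hKdef, hwdef, h, hi, hkπ]
        · simp [hwdef, h]
      rw [Finset.sum_congr rfl fun j _ => this j]
      rw [Finset.sum_ite, Finset.sum_const, Finset.sum_const_zero, add_zero, hmdef,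
        nsmul_eq_mul]
    have hKw : w ⬝ᵥ (K *ᵥ w) = (m : ℝ) * c * ((m : ℝ) * (s * c)) := by
      rw [dotProduct]
      have : ∀ i : Fin t, w i * (K *ᵥ w) i = if p i = π then c * ((m : ℝ) * (s * c)) else 0 := by
        intro i
        by_cases h : p i = π
        · rw [hinner i h]; simp [hwdef, h]
        · simp [hwdef, h]
      rw [Finset.sum_congr rfl fun i _ => this i]
      rw [Finset.sum_ite, Finset.sum_const, Finset.sum_const_zero, add_zero, hmdef,
        nsmul_eq_mul]
      ring
    have hww : w ⬝ᵥ w = (m : ℝ) * (c * c) := by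
      rw [dotProduct]
      have : ∀ i : Fin t, w i * w i = if p i = π then c * c else 0 := by
        intro i
        by_cases h : p i = π
        · simp [hwdef, h]
        · simp [hwdef, h]
      rw [Finset.sum_congr rfl fun i _ => this i]
      rw [Finset.sum_ite, Finset.sum_const, Finset.sum_const_zero, add_zero, hmdef,
        nsmul_eq_mul]
    rw [hKw, hww, smul_eq_mul]
  -- put it together
  have hfin := key w
  rw [hb, ha, hm] at hfin
  have hrhs : s - 2 * ((N : ℝ) * (c * s)) +
      ((N : ℝ) * c * ((N : ℝ) * (s * c)) + lam * ((N : ℝ) * (c * c)))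
      = lam / (lam / s + N) := by
    rw [hcdef, hddef]
    have h1 : lam + (N : ℝ) * s ≠ 0 := by positivity
    have h2 : lam / s + (N : ℝ) ≠ 0 := by positivity
    field_simp
    ring
  rw [hkπ]
  calc s - v ⬝ᵥ u ≤ _ := hfin
    _ = lam / (lam / s + N) := hrhs
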